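/- Let n : ℕ. The map v ↦ (√2 · (z ∘ v), √2 · (w ∘ v)) is a homeomorphism from the subspace S := {v : Fin (n+1) → ℍ | ∑ a, normSq (v a) = 1 and μ(v) = 0} of Fin (n+1) → ℍ (with the product topology) onto the complex Stiefel manifold T := {(a, b) : (Fin (n+1) → ℂ) × (Fin (n+1) → ℂ) | ∑ α, ‖a α‖² = 1, ∑ α, ‖b α‖² = 1, ∑ α, conj(a α) * (b α) = 0} of Hermitian-orthonormal 2-frames in ℂ^{n+1}. (This realizes the Stiefel manifold V₂(ℂ^{n+1}) as the sphere-level zero set of the U(1)-moment map, i.e. the total space of the induced Hopf S³-bundle of Theorem 3.1 (iii) and Corollary 3.3.) -/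

import Mathlib

open Quaternion Finset

/-- The imaginary unit `i` of the quaternions. -/
noncomputable def qi : Quaternion ℝ := ⟨0, 1, 0, 0⟩

/-- The first complex component of a quaternion `h = z(h) + w(h)·j`. -/
noncomputable def zC (h : Quaternion ℝ) : ℂ := ⟨h.re, h.imI⟩

/-- The second complex component of a quaternion `h = z(h) + w(h)·j`. -/
noncomputable def wC (h : Quaternion ℝ) : ℂ := ⟨h.imJ, h.imK⟩

/-- The diagonal `U(1)`-moment map on `ℍ^{n+1}`. -/
noncomputable def μ {n : ℕ} (v : Fin (n + 1) → Quaternion ℝ) : Quaternion ℝ :=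
  ∑ a, star (v a) * qi * v a

/-- The sphere-level zero set of the `U(1)`-moment map. -/
def Sset (n : ℕ) : Set (Fin (n + 1) → Quaternion ℝ) :=
  {v | (∑ a, Quaternion.normSq (v a)) = 1 ∧ μ v = 0}

/-- The complex Stiefel manifold of Hermitian-orthonormal 2-frames in `ℂ^{n+1}`. -/
def Tset (n : ℕ) : Set ((Fin (n + 1) → ℂ) × (Fin (n + 1) → ℂ)) :=
  {p | (∑ α, ‖p.1 α‖ ^ 2) = 1 ∧ (∑ α, ‖p.2 α‖ ^ 2) = 1 ∧
    (∑ α, (starRingEnd ℂ) (p.1 α) * p.2 α) = 0}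

noncomputable def Fq {n : ℕ} (v : Fin (n + 1) → Quaternion ℝ) :
    (Fin (n + 1) → ℂ) × (Fin (n + 1) → ℂ) :=
  (fun a => (Real.sqrt 2 : ℂ) * zC (v a), fun a => (Real.sqrt 2 : ℂ) * wC (v a))

noncomputable def Gq {n : ℕ} (p : (Fin (n + 1) → ℂ) × (Fin (n + 1) → ℂ)) :
    Fin (n + 1) → Quaternion ℝ :=
  fun a => ⟨(p.1 a).re / Real.sqrt 2, (p.1 a).im / Real.sqrt 2,
    (p.2 a).re / Real.sqrt 2, (p.2 a).im / Real.sqrt 2⟩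

lemma sqrt2_ne : (Real.sqrt 2) ≠ 0 := by positivity
lemma sqrt2_sq : (Real.sqrt 2) * Real.sqrt 2 = 2 := Real.mul_self_sqrt (by norm_num)

lemma GF {n : ℕ} (v : Fin (n + 1) → Quaternion ℝ) : Gq (Fq v) = v := by
  funext a
  ext <;> simp [Gq, Fq, zC, wC, Complex.ofReal, mul_comm, mul_div_assoc,
    mul_div_cancel_left₀ _ sqrt2_ne]
lemma FG {n : ℕ} (p : (Fin (n + 1) → ℂ) × (Fin (n + 1) → ℂ)) : Fq (Gq p) = p := by
  ext a <;>
  · apply Complex.ext <;>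
      simp [Gq, Fq, zC, wC, Complex.ofReal] <;> field_simp

lemma qsum_re {n : ℕ} (f : Fin (n+1) → Quaternion ℝ) : (∑ a, f a).re = ∑ a, (f a).re :=
  map_sum (QuaternionAlgebra.reₗ _ _ _) f univ
lemma qsum_imI {n : ℕ} (f : Fin (n+1) → Quaternion ℝ) : (∑ a, f a).imI = ∑ a, (f a).imI :=
  map_sum (QuaternionAlgebra.imIₗ _ _ _) f univ
lemma qsum_imJ {n : ℕ} (f : Fin (n+1) → Quaternion ℝ) : (∑ a, f a).imJ = ∑ a, (f a).imJ :=
  map_sum (QuaternionAlgebra.imJₗ _ _ _) f univ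
lemma qsum_imK {n : ℕ} (f : Fin (n+1) → Quaternion ℝ) : (∑ a, f a).imK = ∑ a, (f a).imK :=
  map_sum (QuaternionAlgebra.imKₗ _ _ _) f univ

lemma comp_imI (h : Quaternion ℝ) :
    (star h * qi * h).imI = h.re^2 + h.imI^2 - h.imJ^2 - h.imK^2 := by
  simp [Quaternion.re_mul, Quaternion.imI_mul, Quaternion.imJ_mul, Quaternion.imK_mul]; simp [qi]; ring
lemma comp_re (h : Quaternion ℝ) : (star h * qi * h).re = 0 := by
  simp [Quaternion.re_mul, Quaternion.imI_mul, Quaternion.imJ_mul, Quaternion.imK_mul]; simp [qi]; ring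
lemma comp_imJ (h : Quaternion ℝ) :
    (star h * qi * h).imJ = 2*(h.imI*h.imJ - h.re*h.imK) := by
  simp [Quaternion.re_mul, Quaternion.imI_mul, Quaternion.imJ_mul, Quaternion.imK_mul]; simp [qi]; ring
lemma comp_imK (h : Quaternion ℝ) :
    (star h * qi * h).imK = 2*(h.imI*h.imK + h.re*h.imJ) := by
  simp [Quaternion.re_mul, Quaternion.imI_mul, Quaternion.imJ_mul, Quaternion.imK_mul]; simp [qi]; ring

lemma normz (h : Quaternion ℝ) : ‖(Real.sqrt 2 : ℂ) * zC h‖^2 = 2*(h.re^2 + h.imI^2) := by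
  rw [norm_mul, mul_pow, Complex.norm_real, Real.norm_eq_abs, sq_abs,
    Real.sq_sqrt (by norm_num : (0:ℝ) ≤ 2), Complex.sq_norm]
  simp [zC, Complex.normSq_mk]; ring

lemma normw (h : Quaternion ℝ) : ‖(Real.sqrt 2 : ℂ) * wC h‖^2 = 2*(h.imJ^2 + h.imK^2) := by
  rw [norm_mul, mul_pow, Complex.norm_real, Real.norm_eq_abs, sq_abs,
    Real.sq_sqrt (by norm_num : (0:ℝ) ≤ 2), Complex.sq_norm]
  simp [wC, Complex.normSq_mk]; ring

lemma conj_re (h : Quaternion ℝ) :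
    ((starRingEnd ℂ) ((Real.sqrt 2 : ℂ) * zC h) * ((Real.sqrt 2 : ℂ) * wC h)).re =
      2*(h.re*h.imJ + h.imI*h.imK) := by
  simp [zC, wC, Complex.mul_re, Complex.mul_im]
  linear_combination (h.re*h.imJ + h.imI*h.imK) * sqrt2_sq

lemma conj_im (h : Quaternion ℝ) :
    ((starRingEnd ℂ) ((Real.sqrt 2 : ℂ) * zC h) * ((Real.sqrt 2 : ℂ) * wC h)).im =
      2*(h.re*h.imK - h.imI*h.imJ) := by
  simp [zC, wC, Complex.mul_re, Complex.mul_im]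
  linear_combination (h.re*h.imK - h.imI*h.imJ) * sqrt2_sq

lemma mem_iff {n : ℕ} (v : Fin (n + 1) → Quaternion ℝ) : v ∈ Sset n ↔ Fq v ∈ Tset n := by
  set SA := ∑ a, ((v a).re^2 + (v a).imI^2) with hSA
  set SB := ∑ a, ((v a).imJ^2 + (v a).imK^2) with hSB
  set SC := ∑ a, ((v a).re*(v a).imJ + (v a).imI*(v a).imK) with hSC
  set SD := ∑ a, ((v a).re*(v a).imK - (v a).imI*(v a).imJ) with hSD
  have e1 : ∑ a, Quaternion.normSq (v a) = SA + SB := by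
    rw [hSA, hSB, ← Finset.sum_add_distrib]
    refine Finset.sum_congr rfl fun a _ => ?_
    rw [Quaternion.normSq_def']; ring
  have eI : (μ v).imI = SA - SB := by
    rw [μ, qsum_imI, hSA, hSB, ← Finset.sum_sub_distrib]
    exact Finset.sum_congr rfl fun a _ => by rw [comp_imI]; ring
  have eR : (μ v).re = 0 := by
    rw [μ, qsum_re]
    exact Finset.sum_eq_zero fun a _ => comp_re _
  have eJ : (μ v).imJ = -(2*SD) := by
    rw [μ, qsum_imJ, hSD, Finset.mul_sum, ← Finset.sum_neg_distrib]
    exact Finset.sum_congr rfl fun a _ => by rw [comp_imJ]; ring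
  have eK : (μ v).imK = 2*SC := by
    rw [μ, qsum_imK, hSC, Finset.mul_sum]
    exact Finset.sum_congr rfl fun a _ => by rw [comp_imK]; ring
  have hS : v ∈ Sset n ↔ (SA + SB = 1 ∧ SA - SB = 0 ∧ SC = 0 ∧ SD = 0) := by
    rw [Sset, Set.mem_setOf_eq, e1, Quaternion.ext_iff, eI, eR, eJ, eK]
    simp only [Quaternion.re_zero, Quaternion.imI_zero, Quaternion.imJ_zero, Quaternion.imK_zero]
    constructor
    · rintro ⟨p, -, q, r, s⟩; exact ⟨p, q, by linarith, by linarith⟩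
    · rintro ⟨p, q, r, s⟩; exact ⟨p, trivial, q, by linarith, by linarith⟩
  have t1 : ∑ α, ‖(Fq v).1 α‖^2 = 2*SA := by
    simp only [Fq]; rw [hSA, Finset.mul_sum]
    exact Finset.sum_congr rfl fun a _ => normz _
  have t2 : ∑ α, ‖(Fq v).2 α‖^2 = 2*SB := by
    simp only [Fq]; rw [hSB, Finset.mul_sum]
    exact Finset.sum_congr rfl fun a _ => normw _
  have t3re : (∑ α, (starRingEnd ℂ) ((Fq v).1 α) * (Fq v).2 α).re = 2*SC := by
    simp only [Fq]
    rw [Complex.re_sum, hSC, Finset.mul_sum]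
    exact Finset.sum_congr rfl fun a _ => conj_re _
  have t3im : (∑ α, (starRingEnd ℂ) ((Fq v).1 α) * (Fq v).2 α).im = 2*SD := by
    simp only [Fq]
    rw [Complex.im_sum, hSD, Finset.mul_sum]
    exact Finset.sum_congr rfl fun a _ => conj_im _
  have hT : Fq v ∈ Tset n ↔ (2*SA = 1 ∧ 2*SB = 1 ∧ 2*SC = 0 ∧ 2*SD = 0) := by
    rw [Tset, Set.mem_setOf_eq, t1, t2, Complex.ext_iff, Complex.zero_re, Complex.zero_im,
      t3re, t3im]
  rw [hS, hT]
  constructor <;> rintro ⟨p, q, r, s⟩ <;>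
    exact ⟨by linarith, by linarith, by linarith, by linarith⟩

lemma cont_zC : Continuous zC := by
  have : zC = fun h : Quaternion ℝ => (h.re : ℂ) + h.imI * Complex.I := by
    funext h; apply Complex.ext <;> simp [zC]
  rw [this]
  exact (Complex.continuous_ofReal.comp Quaternion.continuous_re).add
    ((Complex.continuous_ofReal.comp Quaternion.continuous_imI).mul continuous_const)

lemma cont_wC : Continuous wC := by
  have : wC = fun h : Quaternion ℝ => (h.imJ : ℂ) + h.imK * Complex.I := by
    funext h; apply Complex.ext <;> simp [wC]
  rw [this]
  exact (Complex.continuous_ofReal.comp Quaternion.continuous_imJ).add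
    ((Complex.continuous_ofReal.comp Quaternion.continuous_imK).mul continuous_const)

noncomputable def qj : Quaternion ℝ := ⟨0, 0, 1, 0⟩
noncomputable def qk : Quaternion ℝ := ⟨0, 0, 0, 1⟩

lemma cont_Fq {n : ℕ} : Continuous (Fq (n := n)) := by
  refine Continuous.prodMk ?_ ?_
  · exact continuous_pi fun a => continuous_const.mul (cont_zC.comp (continuous_apply a))
  · exact continuous_pi fun a => continuous_const.mul (cont_wC.comp (continuous_apply a))

lemma mk_eq (a b c d : ℝ) : (⟨a, b, c, d⟩ : Quaternion ℝ) =
    (a : Quaternion ℝ) + b • qi + c • qj + d • qk := by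
  ext <;> simp [Quaternion.re_smul, Quaternion.imI_smul, Quaternion.imJ_smul, Quaternion.imK_smul] <;> simp [qi, qj, qk]

lemma cont_Gq {n : ℕ} : Continuous (Gq (n := n)) := by
  refine continuous_pi fun a => ?_
  have h1 : Continuous fun p : (Fin (n+1) → ℂ) × (Fin (n+1) → ℂ) => (p.1 a).re / Real.sqrt 2 :=
    (Complex.continuous_re.comp ((continuous_apply a).comp continuous_fst)).div_const _
  have h2 : Continuous fun p : (Fin (n+1) → ℂ) × (Fin (n+1) → ℂ) => (p.1 a).im / Real.sqrt 2 :=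
    (Complex.continuous_im.comp ((continuous_apply a).comp continuous_fst)).div_const _
  have h3 : Continuous fun p : (Fin (n+1) → ℂ) × (Fin (n+1) → ℂ) => (p.2 a).re / Real.sqrt 2 :=
    (Complex.continuous_re.comp ((continuous_apply a).comp continuous_snd)).div_const _
  have h4 : Continuous fun p : (Fin (n+1) → ℂ) × (Fin (n+1) → ℂ) => (p.2 a).im / Real.sqrt 2 :=
    (Complex.continuous_im.comp ((continuous_apply a).comp continuous_snd)).div_const _
  have : (fun p => Gq (n := n) p a) = fun p =>
      (((p.1 a).re / Real.sqrt 2 : ℝ) : Quaternion ℝ)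
        + ((p.1 a).im / Real.sqrt 2) • qi
        + ((p.2 a).re / Real.sqrt 2) • qj
        + ((p.2 a).im / Real.sqrt 2) • qk := by
    funext p; exact mk_eq _ _ _ _
  rw [this]
  exact (((Quaternion.continuous_coe.comp h1).add (h2.smul continuous_const)).add
    (h3.smul continuous_const)).add (h4.smul continuous_const)

/-- The map `v ↦ (√2·(z∘v), √2·(w∘v))` is a homeomorphism from the sphere-level zero set of the
`U(1)`-moment map onto the complex Stiefel manifold `V₂(ℂ^{n+1})`. -/
theorem stmt_4 (n : ℕ) :
    ∃ e : Sset n ≃ₜ Tset n,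
      ∀ v : Sset n, (e v : (Fin (n + 1) → ℂ) × (Fin (n + 1) → ℂ)) =
        (fun a => (Real.sqrt 2 : ℂ) * zC (v.1 a), fun a => (Real.sqrt 2 : ℂ) * wC (v.1 a)) := by
  refine ⟨{
    toFun := fun v => ⟨Fq v.1, (mem_iff v.1).mp v.2⟩
    invFun := fun p => ⟨Gq p.1, (mem_iff (Gq p.1)).mpr (by rw [FG]; exact p.2)⟩
    left_inv := fun v => Subtype.ext (GF v.1)
    right_inv := fun p => Subtype.ext (FG p.1)
    continuous_toFun := Continuous.subtype_mk (cont_Fq.comp continuous_subtype_val) _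
    continuous_invFun := Continuous.subtype_mk (cont_Gq.comp continuous_subtype_val) _ },
    fun v => rfl⟩
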